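/- Let L be a valuation lattice, i.e., a linearly ordered principally generated C-lattice lattice domain, and let m be its (unique) maximal element. Then L is divisorial if and only if m is a principal element. -/

import Mathlib

/-- A multiplicative lattice: a complete lattice (bottom `⊥` playing the role of `0`)
which is a commutative monoid whose identity `1` is the top element, and in which
multiplication distributes over arbitrary joins. -/
class MulLattice (L : Type*) extends CompleteLattice L, CommMonoid L where
  one_eq_top : (1 : L) = ⊤
  mul_sSup : ∀ (a : L) (S : Set L), a * sSup S = ⨆ b ∈ S, a * b

namespace MulLattice

variable {L : Type*} [MulLattice L]

/-- The residual `(y : x) = ⋁ {a | a * x ≤ y}`. -/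
def res (y x : L) : L := sSup {a : L | a * x ≤ y}

/-- `x` is meet-principal: `y ⊓ z * x = ((y : x) ⊓ z) * x` for all `y, z`. -/
def IsMeetPrincipal (x : L) : Prop := ∀ y z : L, y ⊓ z * x = (res y x ⊓ z) * x

/-- `x` is join-principal: `y ⊔ (z : x) = ((y * x ⊔ z) : x)` for all `y, z`. -/
def IsJoinPrincipal (x : L) : Prop := ∀ y z : L, y ⊔ res z x = res (y * x ⊔ z) x

/-- `x` is principal if it is both meet-principal and join-principal. -/
def IsPrincipal (x : L) : Prop := IsMeetPrincipal x ∧ IsJoinPrincipal x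

/-- A prime element: a proper element `p` with `x * y ≤ p → x ≤ p ∨ y ≤ p`. -/
def IsPrime (p : L) : Prop := p ≠ 1 ∧ ∀ x y : L, x * y ≤ p → x ≤ p ∨ y ≤ p

/-- A maximal element: an element maximal in `L - {1}`. -/
def IsMaximal (m : L) : Prop := m ≠ 1 ∧ ∀ b : L, m < b → b = 1

end MulLattice

/-- A principally generated C-lattice: a multiplicative lattice in which `1` is compact,
compact elements are closed under multiplication, every element is a join of compact
elements and every element is a join of principal elements. -/
class PGCLattice (L : Type*) extends MulLattice L where
  top_isCompact : IsCompactElement (⊤ : L)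
  compact_mul : ∀ a b : L, IsCompactElement a →
    IsCompactElement b → IsCompactElement (a * b)
  compactly_generated : ∀ a : L,
    a = sSup {c : L | IsCompactElement c ∧ c ≤ a}
  principally_generated : ∀ a : L,
    a = sSup {x : L | MulLattice.IsPrincipal x ∧ x ≤ a}

namespace MulLattice

variable {L : Type*}

/-- A lattice domain: `0 = ⊥` is a prime element. -/
def IsLatticeDomain (L : Type*) [MulLattice L] : Prop := IsPrime (⊥ : L)

variable [PGCLattice L]

open Classical in
/-- The divisorial (`v`-)closure of `a`: equals `(x : (x : a))` for a nonzero principal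
`x ≤ a` when such an `x` exists (in a lattice domain this is independent of the choice
of `x`), and `⊥` otherwise (in particular `vclos ⊥ = ⊥`). -/
noncomputable def vclos (a : L) : L :=
  if h : ∃ x : L, IsPrincipal x ∧ x ≠ ⊥ ∧ x ≤ a then
    res h.choose (res h.choose a)
  else ⊥

/-- `a` is divisorial if `a = a_v`. -/
def IsDivisorial (a : L) : Prop := vclos a = a

/-- `L` is h-local: every nonzero prime is below a unique maximal element and
every nonzero element is below only finitely many maximal elements. -/
def IsHLocal (L : Type*) [PGCLattice L] : Prop :=
  (∀ r : L, r ≠ ⊥ → IsPrime r → ∃! m : L, IsMaximal m ∧ r ≤ m) ∧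
  (∀ b : L, b ≠ ⊥ → {m : L | IsMaximal m ∧ b ≤ m}.Finite)

end MulLattice

open MulLattice


section MyLemmas

variable {L : Type*}

section ML
variable [MulLattice L]

lemma my_mul_sup (a b c : L) : a * (b ⊔ c) = a * b ⊔ a * c := by
  rw [← sSup_pair, MulLattice.mul_sSup, iSup_pair]

lemma my_mul_mono {b c : L} (a : L) (h : b ≤ c) : a * b ≤ a * c := by
  have h2 : a * c = a * b ⊔ a * c := by rw [← my_mul_sup, sup_eq_right.2 h]
  rw [h2]; exact le_sup_left

lemma my_mul_sup_right (a b c : L) : (a ⊔ b) * c = a * c ⊔ b * c := by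
  rw [mul_comm, my_mul_sup, mul_comm c a, mul_comm c b]

lemma my_le_one (a : L) : a ≤ 1 := by rw [MulLattice.one_eq_top]; exact le_top

lemma my_mul_le_right (a b : L) : a * b ≤ b := by
  calc a * b ≤ 1 * b := by
        rw [mul_comm a b, mul_comm 1 b]; exact my_mul_mono b (my_le_one a)
    _ = b := one_mul b

lemma my_mul_le_left (a b : L) : a * b ≤ a := by
  rw [mul_comm]; exact my_mul_le_right b a

lemma my_mul_bot (a : L) : a * ⊥ = ⊥ := by
  have h := MulLattice.mul_sSup a (∅ : Set L)
  simpa using h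

lemma my_res_mul_le (y x : L) : res y x * x ≤ y := by
  rw [res, mul_comm, MulLattice.mul_sSup]
  exact iSup₂_le fun a ha => by rw [mul_comm]; exact ha

lemma my_le_res_iff {a y x : L} : a ≤ res y x ↔ a * x ≤ y := by
  constructor
  · intro h
    calc a * x ≤ res y x * x := by
          rw [mul_comm a x, mul_comm (res y x) x]; exact my_mul_mono x h
      _ ≤ y := my_res_mul_le y x
  · intro h; exact le_sSup h

lemma my_res_mono {y y' : L} (x : L) (h : y ≤ y') : res y x ≤ res y' x :=
  my_le_res_iff.2 (le_trans (my_res_mul_le y x) h)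

lemma my_res_anti (y : L) {x x' : L} (h : x ≤ x') : res y x' ≤ res y x := by
  have h2 : res y x' * x ≤ res y x' * x' := my_mul_mono _ h
  exact my_le_res_iff.2 (h2.trans (my_res_mul_le y x'))

lemma my_res_mul (z x y : L) : res z (x * y) = res (res z x) y := by
  have key : ∀ a : L, a ≤ res z (x * y) ↔ a ≤ res (res z x) y := by
    intro a
    rw [my_le_res_iff, my_le_res_iff, my_le_res_iff, mul_assoc, mul_comm x y]
  exact le_antisymm ((key _).1 le_rfl) ((key _).2 le_rfl)

lemma my_res_bot (hdom : IsLatticeDomain L) {p : L} (hp : p ≠ ⊥) :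
    res (⊥ : L) p = ⊥ := by
  refine le_antisymm (sSup_le fun a ha => ?_) bot_le
  rcases hdom.2 a p ha with h | h
  · exact h
  · exact absurd (le_antisymm h bot_le) hp

lemma my_cancel (hdom : IsLatticeDomain L) {p : L} (hp : IsPrincipal p) (hpb : p ≠ ⊥)
    (z : L) : res (z * p) p = z := by
  have h := hp.2 z ⊥
  simp only [my_res_bot hdom hpb, sup_bot_eq] at h
  exact h.symm

lemma my_cancel_le (hdom : IsLatticeDomain L) {p : L} (hp : IsPrincipal p) (hpb : p ≠ ⊥)
    {u z : L} (h : u * p ≤ z * p) : u ≤ z := by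
  have h2 : u ≤ res (z * p) p := my_le_res_iff.2 h
  rwa [my_cancel hdom hp hpb] at h2

lemma my_cancel_eq (hdom : IsLatticeDomain L) {p : L} (hp : IsPrincipal p) (hpb : p ≠ ⊥)
    {u z : L} (h : u * p = z * p) : u = z :=
  le_antisymm (my_cancel_le hdom hp hpb h.le) (my_cancel_le hdom hp hpb h.ge)

lemma my_bot_principal : IsPrincipal (⊥ : L) := by
  constructor
  · intro y z
    rw [my_mul_bot, my_mul_bot, inf_bot_eq]
  · intro y z
    have h1 : res z (⊥ : L) = ⊤ :=
      le_antisymm le_top (le_sSup (by simp [my_mul_bot]))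
    have h2 : res (y * ⊥ ⊔ z) (⊥ : L) = ⊤ :=
      le_antisymm le_top (le_sSup (by simp [my_mul_bot]))
    rw [h1, h2, sup_top_eq]

lemma my_eq_res_mul {q p : L} (hp : IsPrincipal p) (h : q ≤ p) : q = res q p * p := by
  have hm := hp.1 q 1
  rw [one_mul, inf_eq_left.2 h, inf_eq_left.2 (my_le_one (res q p))] at hm
  exact hm

lemma my_inf_mul (hdom : IsLatticeDomain L) {p : L} (hp : IsPrincipal p) (hpb : p ≠ ⊥)
    (u w : L) : (u ⊓ w) * p = u * p ⊓ w * p := by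
  have h := hp.1 (u * p) w
  rw [my_cancel hdom hp hpb] at h
  exact h.symm

lemma my_mul_principal {x y : L} (hx : IsPrincipal x) (hy : IsPrincipal y) :
    IsPrincipal (x * y) := by
  constructor
  · intro u z
    rw [my_res_mul]
    calc u ⊓ z * (x * y) = u ⊓ (z * y) * x := by rw [← mul_assoc, mul_right_comm]
      _ = (res u x ⊓ z * y) * x := hx.1 u (z * y)
      _ = ((res (res u x) y ⊓ z) * y) * x := by rw [hy.1 (res u x) z]
      _ = (res (res u x) y ⊓ z) * (x * y) := by rw [mul_assoc, mul_comm y x]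
  · intro u z
    rw [my_res_mul, my_res_mul, hy.2 u (res z x), hx.2 (u * y) z, mul_assoc,
      mul_comm y x]

lemma my_le_maximal {m : L} (hlin : ∀ a b : L, a ≤ b ∨ b ≤ a)
    (hm : IsMaximal m) {s : L} (hs : s ≠ 1) : s ≤ m := by
  rcases hlin s m with h | h
  · exact h
  · rcases eq_or_lt_of_le h with he | hlt
    · exact le_of_eq he.symm
    · exact absurd (hm.2 s hlt) hs

lemma my_factor_principal (hdom : IsLatticeDomain L) {p m : L} (hp : IsPrincipal p)
    (hpb : p ≠ ⊥) (hx : IsPrincipal (m * p)) : IsPrincipal m := by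
  have key : ∀ y : L, res y m = res (y * p) (m * p) := by
    intro y
    have h : ∀ a : L, a ≤ res y m ↔ a ≤ res (y * p) (m * p) := by
      intro a
      rw [my_le_res_iff, my_le_res_iff]
      constructor
      · intro h
        calc a * (m * p) = (a * m) * p := (mul_assoc _ _ _).symm
          _ ≤ y * p := by
              rw [mul_comm (a * m) p, mul_comm y p]; exact my_mul_mono p h
      · intro h
        apply my_cancel_le hdom hp hpb
        calc (a * m) * p = a * (m * p) := mul_assoc _ _ _
          _ ≤ y * p := h
    exact le_antisymm ((h _).1 le_rfl) ((h _).2 le_rfl)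
  constructor
  · intro y z
    apply my_cancel_eq hdom hp hpb
    calc (y ⊓ z * m) * p = y * p ⊓ (z * m) * p := my_inf_mul hdom hp hpb y (z * m)
      _ = y * p ⊓ z * (m * p) := by rw [mul_assoc]
      _ = (res (y * p) (m * p) ⊓ z) * (m * p) := hx.1 (y * p) z
      _ = (res y m ⊓ z) * (m * p) := by rw [← key y]
      _ = ((res y m ⊓ z) * m) * p := (mul_assoc _ _ _).symm
  · intro y z
    rw [key z, key (y * m ⊔ z)]
    have h2 : (y * m ⊔ z) * p = y * (m * p) ⊔ z * p := by
      rw [my_mul_sup_right, mul_assoc]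
    rw [h2]
    exact hx.2 y (z * p)

end ML

section PG
variable [PGCLattice L]

lemma my_exists_principal_not_le {b c : L} (h : ¬ b ≤ c) :
    ∃ q : L, IsPrincipal q ∧ q ≤ b ∧ ¬ q ≤ c := by
  by_contra hall
  push_neg at hall
  apply h
  conv_lhs => rw [PGCLattice.principally_generated b]
  exact sSup_le fun q hq => hall q hq.1 hq.2

lemma my_exists_nonzero_principal_le {a : L} (ha : a ≠ ⊥) :
    ∃ x : L, IsPrincipal x ∧ x ≠ ⊥ ∧ x ≤ a := by
  by_contra hno
  push_neg at hno
  apply ha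
  have hpg := PGCLattice.principally_generated a
  rw [hpg]
  refine le_bot_iff.1 (sSup_le fun x hx => ?_)
  by_cases hxb : x = ⊥
  · exact le_of_eq hxb
  · exact absurd hx.2 (hno x hx.1 hxb)

lemma my_vclos_eq {a : L} (h : ∃ x : L, IsPrincipal x ∧ x ≠ ⊥ ∧ x ≤ a) :
    vclos a = res h.choose (res h.choose a) := by
  simp only [vclos]
  rw [dif_pos h]

lemma my_vclos_eq' {a : L} (h : ∃ x : L, IsPrincipal x ∧ x ≠ ⊥ ∧ x ≤ a) :
    ∃ x : L, IsPrincipal x ∧ x ≠ ⊥ ∧ x ≤ a ∧ vclos a = res x (res x a) :=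
  ⟨h.choose, h.choose_spec.1, h.choose_spec.2.1, h.choose_spec.2.2, my_vclos_eq h⟩

lemma my_principal_divisorial (hdom : IsLatticeDomain L)
    (hlin : ∀ a b : L, a ≤ b ∨ b ≤ a) {x P : L} (hx : IsPrincipal x) (hxb : x ≠ ⊥)
    (hxP : x ≤ P) (hP : IsPrincipal P) : res x (res x P) = P := by
  refine le_antisymm ?_ (my_le_res_iff.2 (by rw [mul_comm]; exact my_res_mul_le x P))
  by_contra hcon
  obtain ⟨q, hq, hqR, hqP⟩ := my_exists_principal_not_le hcon
  have hPq : P ≤ q := (hlin q P).resolve_left hqP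
  have hqb : q ≠ ⊥ := fun hh => hqP (by rw [hh]; exact bot_le)
  have hxr : x = res x P * P := my_eq_res_mul hP hxP
  have hqrx : q * res x P ≤ x := my_le_res_iff.1 hqR
  have hxqr : x ≤ q * res x P := by
    calc x = res x P * P := hxr
      _ ≤ res x P * q := my_mul_mono _ hPq
      _ = q * res x P := mul_comm _ _
  have hx_eq : q * res x P = x := le_antisymm hqrx hxqr
  have hPs : P = res P q * q := my_eq_res_mul hq hPq
  have hxs : x = res P q * x := by
    calc x = res x P * P := hxr
      _ = res x P * (res P q * q) := by rw [← hPs]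
      _ = res P q * (q * res x P) := by
          rw [mul_left_comm, mul_comm (res x P) q]
      _ = res P q * x := by rw [hx_eq]
  have hs1 : (1 : L) ≤ res P q := by
    have h1 : (1 : L) ≤ res x x := my_le_res_iff.2 (by rw [one_mul])
    have h2 : res (res P q * x) x = res P q := my_cancel hdom hx hxb (res P q)
    rw [← hxs] at h2
    exact h2 ▸ h1
  have hPq' : P = q := by
    have hs : res P q = 1 := le_antisymm (my_le_one _) hs1
    rw [hPs, hs, one_mul]
  exact hqP (by rw [← hPq'])

end PG

end MyLemmas

theorem stmt18 {L : Type*} [PGCLattice L] (hL : IsLatticeDomain L)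
    (hlin : ∀ a b : L, a ≤ b ∨ b ≤ a)
    (m : L) (hm : IsMaximal m) :
    (∀ a : L, IsDivisorial a) ↔ IsPrincipal m := by
  constructor
  · -- divisorial → m principal
    intro hdiv
    by_cases hmb : m = ⊥
    · rw [hmb]; exact my_bot_principal
    obtain ⟨x, hx, hxb, hxm, hveq⟩ :=
      my_vclos_eq' (my_exists_nonzero_principal_le hmb)
    have hvm : res x (res x m) = m := by
      have hd := hdiv m
      rw [IsDivisorial, hveq] at hd
      exact hd
    by_cases hrx : res x m ≤ x
    · exfalso
      have hxr : x ≤ res x m := my_le_res_iff.2 (my_mul_le_left x m)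
      have hre : res x m = x := le_antisymm hrx hxr
      rw [hre] at hvm
      have h1 : (1 : L) ≤ res x x := my_le_res_iff.2 (by rw [one_mul])
      rw [hvm] at h1
      exact hm.1 (le_antisymm (my_le_one m) h1)
    · obtain ⟨p, hp, hpr, hpx⟩ := my_exists_principal_not_le hrx
      have hxp : x ≤ p := (hlin x p).resolve_right hpx
      have hpb : p ≠ ⊥ := fun hh => hxb (le_bot_iff.1 (hh ▸ hxp))
      have hs : x = res x p * p := my_eq_res_mul hp hxp
      have hsne : res x p ≠ 1 := by
        intro h1
        apply hpx
        rw [hs, h1, one_mul]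
      have hsm : res x p ≤ m := my_le_maximal hlin hm hsne
      have hms : m ≤ res x p := by
        have h1 : m * p ≤ x := by
          rw [mul_comm]; exact my_le_res_iff.1 hpr
        rw [hs] at h1
        exact my_cancel_le hL hp hpb h1
      have hmeq : m = res x p := le_antisymm hms hsm
      have hmp : m * p = x := by rw [hmeq, ← hs]
      exact my_factor_principal hL hp hpb (by rw [hmp]; exact hx)
  · -- m principal → divisorial
    intro hmp a
    by_cases hab : a = ⊥
    · rw [IsDivisorial, hab]
      simp only [vclos]
      rw [dif_neg]
      rintro ⟨x, hx, hxb, hle⟩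
      exact hxb (le_bot_iff.1 hle)
    · obtain ⟨x, hx, hxb, hxa, hveq⟩ :=
        my_vclos_eq' (my_exists_nonzero_principal_le hab)
      rw [IsDivisorial, hveq]
      refine le_antisymm ?_
        (my_le_res_iff.2 (by rw [mul_comm]; exact my_res_mul_le x a))
      by_contra hcon
      obtain ⟨y, hy, hyv, hya⟩ := my_exists_principal_not_le hcon
      have hay : a ≤ y := (hlin y a).resolve_left hya
      have hyb : y ≠ ⊥ := fun hh => hab (le_bot_iff.1 (hh ▸ hay))
      have hamy : a ≤ m * y := by
        conv_lhs => rw [PGCLattice.principally_generated a]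
        refine sSup_le fun q hq => ?_
        obtain ⟨hq, hqa⟩ := hq
        have hqy : q ≤ y := hqa.trans hay
        have hqe : q = res q y * y := my_eq_res_mul hy hqy
        have hsm : res q y ≤ m := by
          apply my_le_maximal hlin hm
          intro h1
          apply hya
          have : y = q := by rw [hqe, h1, one_mul]
          rw [this]; exact hqa
        calc q = res q y * y := hqe
          _ ≤ m * y := by
              rw [mul_comm _ y, mul_comm m y]; exact my_mul_mono y hsm
      have hmyP : IsPrincipal (m * y) := my_mul_principal hmp hy
      have hxmy : x ≤ m * y := hxa.trans hamy
      have hdivP : res x (res x (m * y)) = m * y :=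
        my_principal_divisorial hL hlin hx hxb hxmy hmyP
      have hle : res x (res x a) ≤ m * y := by
        rw [← hdivP]
        exact my_res_anti _ (my_res_anti _ hamy)
      have hymy : y ≤ m * y := hyv.trans hle
      have h1 : (1 : L) ≤ res (m * y) y :=
        my_le_res_iff.2 (by rw [one_mul]; exact hymy)
      rw [my_cancel hL hy hyb m] at h1
      exact absurd (le_antisymm (my_le_one m) h1) hm.1
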